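/- arXiv:0710.0080 — 2 statements merged into one kernel-verified Lean document; each statement's English description precedes it below -/
import Mathlib

section
/- Let s ≥ 2, aₘ = 1 + 1/2 + ... + 1/m, Sₘ = {x ∈ ℝˢ : |x| = aₘ}, and φ the function defined by: φ(x,y) = 0 if y = (a_q/a_p)x for some p, q ∈ ℕ; φ(x,y) = (1/aₘ)|x−y| if x, y ∈ Sₘ for some m; and φ(x,y) = |x−y| otherwise. Then the metric space (ℝˢ, d^φ) with base point O = 0 is totally bounded. -/
noncomputable def deltaPhi {X : Type*} [MetricSpace X] (m : X) (φ : X → X → ℝ) (x y : X) : ℝ :=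
  min (dist x y) (1 / (1 + dist m x) + φ x y + 1 / (1 + dist m y))

noncomputable def dPhi {X : Type*} [MetricSpace X] (m : X) (φ : X → X → ℝ) (x y : X) : ℝ :=
  sInf { r : ℝ | ∃ (n : ℕ) (f : ℕ → X), 1 ≤ n ∧ f 0 = x ∧ f n = y ∧
    r = ∑ i ∈ Finset.range n, deltaPhi m φ (f i) (f (i + 1)) }

/-- aₘ = 1 + 1/2 + ⋯ + 1/m. -/
noncomputable def harm (m : ℕ) : ℝ := ∑ k ∈ Finset.range m, (1 : ℝ) / (k + 1)

-- The function φ for the standard compactification of ℝˢ: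
-- φ(x,y) = 0 if y = (a_q/a_p) x for some p,q ≥ 1; φ(x,y) = (1/aₘ)|x−y| if x,y
-- lie on the sphere Sₘ of radius aₘ (note ‖x‖ = aₘ there); |x−y| otherwise.
open Classical in
noncomputable def phiStd (s : ℕ) (x y : EuclideanSpace ℝ (Fin s)) : ℝ :=
  if ∃ p q : ℕ, 1 ≤ p ∧ 1 ≤ q ∧ y = (harm q / harm p) • x then 0
  else if ∃ m : ℕ, 1 ≤ m ∧ ‖x‖ = harm m ∧ ‖y‖ = harm m then (1 / ‖x‖) * ‖x - y‖
  else ‖x - y‖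

/- ## Auxiliary lemmas -/

lemma harm_succ (m : ℕ) : harm (m + 1) = harm m + 1 / (m + 1) := by
  unfold harm; rw [Finset.sum_range_succ]

lemma harm_nonneg (m : ℕ) : 0 ≤ harm m :=
  Finset.sum_nonneg fun k _ => by positivity

lemma harm_mono : Monotone harm := fun a b hab =>
  Finset.sum_le_sum_of_subset_of_nonneg (Finset.range_subset_range.2 hab)
    (fun k _ _ => by positivity)

lemma one_le_harm {m : ℕ} (hm : 1 ≤ m) : 1 ≤ harm m := by
  have h1 : harm 1 = 1 := by unfold harm; simp
  calc (1 : ℝ) = harm 1 := h1.symm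
    _ ≤ harm m := harm_mono hm

lemma harm_tendsto : Filter.Tendsto harm Filter.atTop Filter.atTop :=
  Real.tendsto_sum_range_one_div_nat_succ_atTop

lemma phiStd_nonneg (s : ℕ) (x y : EuclideanSpace ℝ (Fin s)) : 0 ≤ phiStd s x y := by
  unfold phiStd
  split_ifs
  · exact le_refl 0
  · exact mul_nonneg (by positivity) (norm_nonneg _)
  · exact norm_nonneg _

lemma deltaPhi_nonneg {X : Type*} [MetricSpace X] (m : X) (φ : X → X → ℝ)
    (hφ : ∀ x y, 0 ≤ φ x y) (x y : X) : 0 ≤ deltaPhi m φ x y := by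
  unfold deltaPhi
  refine le_min dist_nonneg ?_
  have h1 : (0:ℝ) ≤ 1 / (1 + dist m x) := by positivity
  have h2 : (0:ℝ) ≤ 1 / (1 + dist m y) := by positivity
  linarith [hφ x y]

lemma dPhi_le_chain {X : Type*} [MetricSpace X] (m : X) (φ : X → X → ℝ)
    (hφ : ∀ a b, 0 ≤ φ a b) (x y : X) {n : ℕ} (f : ℕ → X)
    (hn : 1 ≤ n) (h0 : f 0 = x) (h1 : f n = y) :
    dPhi m φ x y ≤ ∑ i ∈ Finset.range n, deltaPhi m φ (f i) (f (i + 1)) := by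
  apply csInf_le
  · refine ⟨0, ?_⟩
    rintro r ⟨k, g, hk, hg0, hg1, rfl⟩
    exact Finset.sum_nonneg fun i _ => deltaPhi_nonneg m φ hφ _ _
  · exact ⟨n, f, hn, h0, h1, rfl⟩

lemma deltaPhi_le_dist {X : Type*} [MetricSpace X] (m : X) (φ : X → X → ℝ) (x y : X) :
    deltaPhi m φ x y ≤ dist x y := min_le_left _ _

lemma deltaPhi_le_phi {X : Type*} [MetricSpace X] (m : X) (φ : X → X → ℝ) (x y : X) :
    deltaPhi m φ x y ≤ 1 / (1 + dist m x) + φ x y + 1 / (1 + dist m y) := min_le_right _ _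

lemma phiStd_le_sphere (s : ℕ) {m : ℕ} (hm : 1 ≤ m) {x y : EuclideanSpace ℝ (Fin s)}
    (hx : ‖x‖ = harm m) (hy : ‖y‖ = harm m) :
    phiStd s x y ≤ (1 / harm m) * ‖x - y‖ := by
  have hm1 : (1:ℝ) ≤ harm m := one_le_harm hm
  unfold phiStd
  split_ifs with h1 h2
  · exact mul_nonneg (one_div_nonneg.2 (by linarith)) (norm_nonneg _)
  · rw [hx]
  · exact absurd ⟨m, hm, hx, hy⟩ h2

/-- (ℝˢ, d^φ) with base point the origin is totally bounded. -/
theorem stmt10 (s : ℕ) (hs : 2 ≤ s) :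
    ∀ ε > (0 : ℝ), ∃ t : Finset (EuclideanSpace ℝ (Fin s)),
      ∀ x : EuclideanSpace ℝ (Fin s), ∃ y ∈ t,
        dPhi (0 : EuclideanSpace ℝ (Fin s)) (phiStd s) x y < ε := by
  intro ε hε
  classical
  set E := EuclideanSpace ℝ (Fin s)
  -- choose M large
  obtain ⟨M₀, hM₀⟩ := (harm_tendsto.eventually_ge_atTop (8 / ε)).exists
  set M : ℕ := max M₀ (⌈8 / ε⌉₊ + 1) with hMdef
  have hM1 : 1 ≤ M := le_trans (Nat.le_add_left 1 _) (le_max_right _ _)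
  have hMharm : 8 / ε ≤ harm M := le_trans hM₀ (harm_mono (le_max_left _ _))
  have hharmpos : (0:ℝ) < harm M := lt_of_lt_of_le (by positivity) hMharm
  have hsmall : 1 / (1 + harm M) < ε / 8 := by
    rw [div_lt_div_iff₀ (by linarith) (by norm_num)]
    have : 8 / ε * ε = 8 := div_mul_cancel₀ 8 (ne_of_gt hε)
    nlinarith
  have hMnat : 8 / ε < (M:ℝ) + 1 := by
    have h1 : (8 / ε : ℝ) ≤ ⌈8 / ε⌉₊ := Nat.le_ceil _
    have h2 : (⌈8 / ε⌉₊ : ℝ) < (M:ℝ) + 1 := by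
      have : ⌈8 / ε⌉₊ ≤ M := le_trans (Nat.le_succ _) (le_max_right _ _)
      exact_mod_cast Nat.lt_succ_of_le this
    linarith
  -- finite nets
  have hball : IsCompact (Metric.closedBall (0:E) (harm M)) := isCompact_closedBall _ _
  have hsph : IsCompact (Metric.sphere (0:E) (harm M)) := isCompact_sphere _ _
  obtain ⟨t₁, ht₁sub, ht₁fin, ht₁cov⟩ :=
    totallyBounded_iff_subset.1 hball.totallyBounded _ (Metric.dist_mem_uniformity hε)
  obtain ⟨t₂, ht₂sub, ht₂fin, ht₂cov⟩ :=
    totallyBounded_iff_subset.1 hsph.totallyBounded _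
      (Metric.dist_mem_uniformity (show (0:ℝ) < harm M * (ε / 8) by positivity))
  refine ⟨ht₁fin.toFinset ∪ ht₂fin.toFinset, fun x => ?_⟩
  by_cases hx : ‖x‖ ≤ harm M
  · -- near case: Euclidean net
    have hxmem : x ∈ Metric.closedBall (0:E) (harm M) := by
      simpa [Metric.mem_closedBall, dist_zero_right] using hx
    obtain ⟨y, hy, hxy⟩ := Set.mem_iUnion₂.1 (ht₁cov hxmem)
    refine ⟨y, Finset.mem_union_left _ (ht₁fin.mem_toFinset.2 hy), ?_⟩
    have hd : dist x y < ε := hxy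
    set g : ℕ → E := fun i => if i = 0 then x else y with hgdef
    have hchain := dPhi_le_chain (0:E) (phiStd s) (phiStd_nonneg s) x y g
      le_rfl (by simp [hgdef]) (by simp [hgdef])
    have hsum : ∑ i ∈ Finset.range 1, deltaPhi (0:E) (phiStd s) (g i) (g (i+1)) =
        deltaPhi (0:E) (phiStd s) x y := by
      rw [Finset.sum_range_one]
      norm_num [hgdef]
    rw [hsum] at hchain
    exact lt_of_le_of_lt (hchain.trans (deltaPhi_le_dist _ _ _ _)) hd
  · -- far case
    push_neg at hx
    have hxpos : (0:ℝ) < ‖x‖ := lt_trans hharmpos hx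
    -- find p with harm p ≤ ‖x‖ < harm (p+1), p ≥ M
    have hex : ∃ n, ‖x‖ < harm n := (harm_tendsto.eventually_gt_atTop ‖x‖).exists
    set n₀ := Nat.find hex with hn₀def
    have hn₀ : ‖x‖ < harm n₀ := Nat.find_spec hex
    have hMn₀ : M < n₀ := by
      by_contra h
      push_neg at h
      have : harm n₀ ≤ harm M := harm_mono h
      linarith
    set p := n₀ - 1 with hpdef
    have hpn : p + 1 = n₀ := Nat.succ_pred_eq_of_pos (Nat.lt_of_le_of_lt (Nat.zero_le M) hMn₀)
    have hMp : M ≤ p := by omega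
    have hp1 : 1 ≤ p := le_trans hM1 hMp
    have hple : harm p ≤ ‖x‖ := by
      by_contra h
      push_neg at h
      exact Nat.find_min hex (by omega) h
    have hgap : ‖x‖ - harm p < 1 / (p + 1) := by
      have := harm_succ p
      rw [hpn] at this
      linarith [hn₀, this]
    have hharmp : (0:ℝ) < harm p := lt_of_lt_of_le (by norm_num) (one_le_harm hp1)
    have hharmpM : harm M ≤ harm p := harm_mono hMp
    -- chain points
    set xt : E := (harm p / ‖x‖) • x with hxtdef
    set x2 : E := (harm M / harm p) • xt with hx2def
    have hxt_norm : ‖xt‖ = harm p := by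
      rw [hxtdef, norm_smul, Real.norm_eq_abs, abs_of_pos (by positivity),
        div_mul_cancel₀ _ (ne_of_gt hxpos)]
    have hx2_norm : ‖x2‖ = harm M := by
      rw [hx2def, norm_smul, Real.norm_eq_abs, abs_of_pos (by positivity), hxt_norm,
        div_mul_cancel₀ _ (ne_of_gt hharmp)]
    have hx2sph : x2 ∈ Metric.sphere (0:E) (harm M) := by
      simpa [Metric.mem_sphere, dist_zero_right] using hx2_norm
    obtain ⟨y, hy, hx2y⟩ := Set.mem_iUnion₂.1 (ht₂cov hx2sph)
    have hd2 : dist x2 y < harm M * (ε / 8) := hx2y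
    have hy_norm : ‖y‖ = harm M := by
      have := ht₂sub hy
      simpa [Metric.mem_sphere, dist_zero_right] using this
    refine ⟨y, Finset.mem_union_right _ (ht₂fin.mem_toFinset.2 hy), ?_⟩
    -- the chain
    set f : ℕ → E := fun i => if i = 0 then x else if i = 1 then xt else if i = 2 then x2 else y
      with hfdef
    have hchain := dPhi_le_chain (0:E) (phiStd s) (phiStd_nonneg s) x y f
      (show 1 ≤ 3 by norm_num) (by simp [hfdef]) (by simp [hfdef])
    have hsum : ∑ i ∈ Finset.range 3, deltaPhi (0:E) (phiStd s) (f i) (f (i+1)) =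
        deltaPhi (0:E) (phiStd s) x xt + deltaPhi (0:E) (phiStd s) xt x2 +
        deltaPhi (0:E) (phiStd s) x2 y := by
      rw [Finset.sum_range_succ, Finset.sum_range_succ, Finset.sum_range_succ,
        Finset.sum_range_zero]
      norm_num [hfdef]
    -- bound the three steps
    have step1 : deltaPhi (0:E) (phiStd s) x xt < ε / 8 := by
      refine lt_of_le_of_lt (deltaPhi_le_dist _ _ _ _) ?_
      have : dist x xt = ‖x‖ - harm p := by
        rw [dist_eq_norm, hxtdef]
        have : x - (harm p / ‖x‖) • x = (1 - harm p / ‖x‖) • x := by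
          rw [sub_smul, one_smul]
        rw [this, norm_smul, Real.norm_eq_abs]
        have h1 : harm p / ‖x‖ ≤ 1 := (div_le_one hxpos).2 hple
        rw [abs_of_nonneg (by linarith), sub_mul, one_mul, div_mul_cancel₀ _ (ne_of_gt hxpos)]
      rw [this]
      have hp8 : 1 / ((p:ℝ) + 1) < ε / 8 := by
        have h1 : 8 / ε < (p:ℝ) + 1 := lt_of_lt_of_le hMnat (by exact_mod_cast by omega)
        rw [div_lt_div_iff₀ (by positivity) (by norm_num)]
        have : 8 / ε * ε = 8 := div_mul_cancel₀ 8 (ne_of_gt hε)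
        nlinarith
      linarith
    have step2 : deltaPhi (0:E) (phiStd s) xt x2 ≤ ε / 4 := by
      refine le_trans (deltaPhi_le_phi _ _ _ _) ?_
      have hphi0 : phiStd s xt x2 = 0 := by
        unfold phiStd
        rw [if_pos ⟨p, M, hp1, hM1, hx2def⟩]
      rw [hphi0, dist_zero_left, dist_zero_left, hxt_norm, hx2_norm]
      have h1 : 1 / (1 + harm p) ≤ 1 / (1 + harm M) :=
        one_div_le_one_div_of_le (by linarith) (by linarith)
      linarith [hsmall]
    have step3 : deltaPhi (0:E) (phiStd s) x2 y < 3 * (ε / 8) := by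
      refine lt_of_le_of_lt (deltaPhi_le_phi _ _ _ _) ?_
      rw [dist_zero_left, dist_zero_left, hx2_norm, hy_norm]
      have hphi : phiStd s x2 y ≤ (1 / harm M) * ‖x2 - y‖ :=
        phiStd_le_sphere s hM1 hx2_norm hy_norm
      have h2 : (1 / harm M) * ‖x2 - y‖ < ε / 8 := by
        rw [← dist_eq_norm]
        have := hd2
        rw [div_mul_eq_mul_div, mul_comm]
        rw [div_lt_iff₀ hharmpos]
        calc dist x2 y * 1 = dist x2 y := mul_one _
          _ < harm M * (ε / 8) := hd2
          _ = ε / 8 * harm M := by ring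
      linarith [hsmall]
    calc dPhi (0:E) (phiStd s) x y ≤ _ := hchain
      _ = deltaPhi (0:E) (phiStd s) x xt + deltaPhi (0:E) (phiStd s) xt x2 +
          deltaPhi (0:E) (phiStd s) x2 y := hsum
      _ < ε / 8 + ε / 4 + 3 * (ε / 8) := by
          have := step2
          linarith [step1, step3]
      _ ≤ ε := by linarith
end

section
/- Let x, y ∈ ℝˢ with |x| ≥ 1 and |y| ≥ 1, lying on rays L_{x'} and L_{y'} respectively (x', y' unit vectors). For any finite chain x = x₀, x₁, ..., xₘ = y with |xᵢ| < 1 for 1 ≤ i ≤ m−1, we have Σᵢ₌₁ᵐ δ^ψ(x_{i-1}, xᵢ) ≥ d_E(L_{x'}, L_{y'}). -/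
-- The first standard basis vector a₁ = (1,0,…,0) of ℝˢ.
noncomputable def e1 (s : ℕ) : EuclideanSpace ℝ (Fin s) :=
  if h : 0 < s then EuclideanSpace.single (⟨0, h⟩ : Fin s) 1 else 0

-- The direction of the bent ray L_x (bending construction with parameter δ):
-- a₁ if ∠(x,a₁) ≤ δ; −a₁ if ∠(x,−a₁) ≤ δ; otherwise the unit vector in
-- span{a₁, x}, on the same side of the a₁-axis as x, making angle
-- θ = (π/(π−2δ))(∠(x,a₁) − δ) with a₁.
open Classical in
noncomputable def rayDir (s : ℕ) (δ : ℝ) (x : EuclideanSpace ℝ (Fin s)) :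
    EuclideanSpace ℝ (Fin s) :=
  if InnerProductGeometry.angle x (e1 s) ≤ δ then e1 s
  else if InnerProductGeometry.angle x (-(e1 s)) ≤ δ then -(e1 s)
  else
    Real.cos ((Real.pi / (Real.pi - 2 * δ)) * (InnerProductGeometry.angle x (e1 s) - δ)) • e1 s
      + Real.sin ((Real.pi / (Real.pi - 2 * δ)) * (InnerProductGeometry.angle x (e1 s) - δ)) •
        (‖x - (inner ℝ x (e1 s) : ℝ) • e1 s‖⁻¹ • (x - (inner ℝ x (e1 s) : ℝ) • e1 s))

-- The ray L_x starting at the unit vector x, from the bending construction.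
def ray (s : ℕ) (δ : ℝ) (x : EuclideanSpace ℝ (Fin s)) : Set (EuclideanSpace ℝ (Fin s)) :=
  { y | ∃ t : ℝ, 0 ≤ t ∧ y = x + t • rayDir s δ x }

-- d_E(A,B) = inf{|a−b| : a ∈ A, b ∈ B}.
noncomputable def setDist {E : Type*} [MetricSpace E] (A B : Set E) : ℝ :=
  sInf { r : ℝ | ∃ a ∈ A, ∃ b ∈ B, r = dist a b }

-- The function ψ for the bent-ray compactification: ψ(x,y) = 0 if x and y lie
-- on a common ray of L (each on some sphere Sₚ, S_q); ψ(x,y) is the Euclidean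
-- distance between the unit base points of the rays through x and y if
-- x, y ∈ Sₘ (i.e. d_E(h_{m,1}(x), h_{m,1}(y))); and ψ(x,y) = d_E(x,y) otherwise.
open Classical in
noncomputable def psiF (s : ℕ) (δ : ℝ) (x y : EuclideanSpace ℝ (Fin s)) : ℝ :=
  if ∃ x', ‖x'‖ = 1 ∧ x ∈ ray s δ x' ∧ y ∈ ray s δ x' ∧
      ∃ p q : ℕ, 1 ≤ p ∧ 1 ≤ q ∧ ‖x‖ = harm p ∧ ‖y‖ = harm q then 0
  else if h : (∃ m : ℕ, 1 ≤ m ∧ ‖x‖ = harm m ∧ ‖y‖ = harm m) ∧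
      (∃ x', ‖x'‖ = 1 ∧ x ∈ ray s δ x') ∧ (∃ y', ‖y'‖ = 1 ∧ y ∈ ray s δ y') then
    ‖h.2.1.choose - h.2.2.choose‖
  else ‖x - y‖

section TwoD
open Real

noncomputable def thetaF (δ α : ℝ) : ℝ :=
  if α ≤ δ then 0 else if Real.pi - α ≤ δ then Real.pi
  else Real.pi / (Real.pi - 2 * δ) * (α - δ)

lemma thetaF_eq_clamp {δ α : ℝ} (hδ0 : 0 < δ) (hδ : δ < π / 4) :
    thetaF δ α = max 0 (min π (π / (π - 2 * δ) * (α - δ))) := by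
  have hden : 0 < π - 2 * δ := by have := pi_pos; linarith
  have hc : 0 < π / (π - 2 * δ) := by positivity
  unfold thetaF
  split_ifs with h1 h2
  · have hx : π / (π - 2 * δ) * (α - δ) ≤ 0 :=
      mul_nonpos_of_nonneg_of_nonpos hc.le (by linarith)
    rw [max_eq_left]
    exact le_trans (min_le_right _ _) hx
  · have hx : π ≤ π / (π - 2 * δ) * (α - δ) := by
      have h3 : π - 2 * δ ≤ α - δ := by linarith
      calc π = π / (π - 2 * δ) * (π - 2 * δ) := by field_simp
        _ ≤ π / (π - 2 * δ) * (α - δ) := by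
            exact mul_le_mul_of_nonneg_left h3 hc.le
    rw [min_eq_left hx, max_eq_right pi_pos.le]
  · have h0 : 0 ≤ π / (π - 2 * δ) * (α - δ) := by
      apply mul_nonneg hc.le; linarith
    have hπ : π / (π - 2 * δ) * (α - δ) ≤ π := by
      have h3 : α - δ ≤ π - 2 * δ := by linarith
      calc π / (π - 2 * δ) * (α - δ) ≤ π / (π - 2 * δ) * (π - 2 * δ) :=
            mul_le_mul_of_nonneg_left h3 hc.le
        _ = π := by field_simp
    rw [min_eq_right hπ, max_eq_right h0]

lemma thetaF_nonneg {δ α : ℝ} (hδ0 : 0 < δ) (hδ : δ < π / 4) : 0 ≤ thetaF δ α := by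
  rw [thetaF_eq_clamp hδ0 hδ]; exact le_max_left _ _

lemma thetaF_le_pi {δ α : ℝ} (hδ0 : 0 < δ) (hδ : δ < π / 4) : thetaF δ α ≤ π := by
  rw [thetaF_eq_clamp hδ0 hδ]
  exact max_le pi_pos.le (min_le_left _ _)

lemma thetaF_mono {δ α β : ℝ} (hδ0 : 0 < δ) (hδ : δ < π / 4) (hab : α ≤ β) :
    thetaF δ α ≤ thetaF δ β := by
  have hden : 0 < π - 2 * δ := by have := pi_pos; linarith
  have hc : 0 < π / (π - 2 * δ) := by positivity
  rw [thetaF_eq_clamp hδ0 hδ, thetaF_eq_clamp hδ0 hδ]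
  apply max_le_max le_rfl
  apply min_le_min le_rfl
  exact mul_le_mul_of_nonneg_left (by linarith) hc.le

lemma thetaF_dist {δ α : ℝ} (hδ0 : 0 < δ) (hδ : δ < π / 4) (hα0 : 0 ≤ α) (hα : α ≤ π) :
    |thetaF δ α - α| ≤ δ * π / (π - 2 * δ) := by
  have hden : 0 < π - 2 * δ := by have := pi_pos; linarith
  have hδK : δ ≤ δ * π / (π - 2 * δ) := by
    rw [le_div_iff₀ hden]; nlinarith
  unfold thetaF
  split_ifs with h1 h2
  · rw [zero_sub, abs_neg, abs_of_nonneg hα0]; linarith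
  · rw [abs_of_nonneg (by linarith : (0:ℝ) ≤ π - α)]; linarith
  · have key : π / (π - 2 * δ) * (α - δ) - α = δ * (2 * α - π) / (π - 2 * δ) := by
      field_simp; ring
    rw [key, abs_div, abs_of_pos hden, div_le_div_iff₀ hden hden]
    have h2 : |2 * α - π| ≤ π := by
      rw [abs_le]; constructor <;> linarith [pi_pos]
    rw [abs_mul, abs_of_pos hδ0]
    nlinarith [mul_le_mul_of_nonneg_left h2 (mul_nonneg hδ0.le hden.le)]

lemma K_lt_half_pi {δ : ℝ} (hδ0 : 0 < δ) (hδ : δ < π / 4) : δ * π / (π - 2 * δ) < π / 2 := by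
  have hden : 0 < π - 2 * δ := by have := pi_pos; linarith
  rw [div_lt_iff₀ hden]; nlinarith [pi_pos]

set_option maxHeartbeats 1000000 in
lemma twoD {δ α β t r : ℝ} (hδ0 : 0 < δ) (hδ : δ < π / 4)
    (hα0 : 0 < α) (hβπ : β < π) (hab : α < β) (ht : 0 ≤ t) (hr : 0 ≤ r)
    (h1 : Real.cos α + t * Real.cos (thetaF δ α) = Real.cos β + r * Real.cos (thetaF δ β))
    (h2 : Real.sin α + t * Real.sin (thetaF δ α) = Real.sin β + r * Real.sin (thetaF δ β)) :
    False := by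
  have hαπ : α < π := lt_trans hab hβπ
  have hβ0 : 0 < β := lt_trans hα0 hab
  set θ1 := thetaF δ α with hθ1def
  set θ2 := thetaF δ β with hθ2def
  have hθ10 : 0 ≤ θ1 := thetaF_nonneg hδ0 hδ
  have hθ1π : θ1 ≤ π := thetaF_le_pi hδ0 hδ
  have hθ20 : 0 ≤ θ2 := thetaF_nonneg hδ0 hδ
  have hθ2π : θ2 ≤ π := thetaF_le_pi hδ0 hδ
  have hmono : θ1 ≤ θ2 := thetaF_mono hδ0 hδ hab.le
  set K := δ * π / (π - 2 * δ) with hKdef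
  have hK : K < π / 2 := K_lt_half_pi hδ0 hδ
  have hd1 : |θ1 - α| ≤ K := thetaF_dist hδ0 hδ hα0.le hαπ.le
  have hd2 : |θ2 - β| ≤ K := thetaF_dist hδ0 hδ hβ0.le hβπ.le
  rw [abs_le] at hd1 hd2
  set A := (α + β) / 2 with hAdef
  set D := (β - α) / 2 with hDdef
  have hD0 : 0 < D := by rw [hDdef]; linarith
  have hDπ : D < π := by rw [hDdef]; linarith
  have hsD : 0 < Real.sin D := sin_pos_of_pos_of_lt_pi hD0 hDπ
  have hA1 : α < A := by rw [hAdef]; linarith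
  have hA2 : A < β := by rw [hAdef]; linarith
  by_cases hpi : θ2 - θ1 = π
  · -- antiparallel case: θ1 = 0, θ2 = π
    have hθ1 : θ1 = 0 := by linarith
    have hθ2 : θ2 = π := by linarith
    rw [hθ1, hθ2, Real.cos_zero, Real.cos_pi] at h1
    rw [hθ1, hθ2, Real.sin_zero, Real.sin_pi] at h2
    have hαK : α ≤ K := by have := hd1.1; rw [hθ1] at this; linarith
    have hβK : π - β ≤ K := by have := hd2.2; rw [hθ2] at this; linarith
    have hcα : 0 < Real.cos α := cos_pos_of_mem_Ioo ⟨by linarith, by linarith⟩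
    have hcβ : Real.cos β < 0 := cos_neg_of_pi_div_two_lt_of_lt (by linarith) (by linarith)
    have hsab : Real.sin α = Real.sin β := by linarith
    have hpy1 := Real.sin_sq_add_cos_sq α
    have hpy2 := Real.sin_sq_add_cos_sq β
    have h4 : (Real.cos α + Real.cos β) * (Real.cos α - Real.cos β) = 0 := by
      linear_combination hpy1 - hpy2 - (Real.sin α + Real.sin β) * hsab
    have hcc : Real.cos α + Real.cos β = 0 := by
      rcases mul_eq_zero.mp h4 with h | h
      · exact h
      · linarith
    linarith
  · have hlt : θ2 - θ1 < π := lt_of_le_of_ne (by linarith) hpi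
    -- trig identities
    have hsin : Real.sin α - Real.sin β = -(2 * Real.sin D * Real.cos A) := by
      rw [Real.sin_sub_sin, show (α - β) / 2 = -D by rw [hDdef]; ring,
        show (α + β) / 2 = A from rfl, Real.sin_neg]
      ring
    have hcos : Real.cos α - Real.cos β = 2 * Real.sin A * Real.sin D := by
      rw [Real.cos_sub_cos, show (α - β) / 2 = -D by rw [hDdef]; ring,
        show (α + β) / 2 = A from rfl, Real.sin_neg]
      ring
    have id2 : t * (Real.sin θ2 * Real.cos θ1 - Real.cos θ2 * Real.sin θ1)
        = -(2 * Real.sin D * Real.cos (θ2 - A)) := by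
      rw [Real.cos_sub]
      linear_combination Real.sin θ2 * h1 - Real.cos θ2 * h2 - Real.sin θ2 * hcos
        + Real.cos θ2 * hsin
    have id1 : r * (Real.sin θ2 * Real.cos θ1 - Real.cos θ2 * Real.sin θ1)
        = -(2 * Real.sin D * Real.cos (θ1 - A)) := by
      rw [Real.cos_sub]
      linear_combination Real.sin θ1 * h1 - Real.cos θ1 * h2 - Real.sin θ1 * hcos
        + Real.cos θ1 * hsin
    have hc1 : Real.cos (θ1 - A) ≤ 0 ∧ Real.cos (θ2 - A) ≤ 0 := by
      rcases eq_or_lt_of_le hmono with heq | hlt2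
      · have hS : Real.sin θ2 * Real.cos θ1 - Real.cos θ2 * Real.sin θ1 = 0 := by
          rw [heq]; ring
        rw [hS, mul_zero] at id1
        have : Real.cos (θ1 - A) = 0 := by nlinarith
        rw [heq] at this ⊢
        exact ⟨le_of_eq this, le_of_eq this⟩
      · have hS : 0 < Real.sin θ2 * Real.cos θ1 - Real.cos θ2 * Real.sin θ1 := by
          have := sin_pos_of_pos_of_lt_pi (by linarith : 0 < θ2 - θ1) hlt
          rw [Real.sin_sub] at this; linarith
        constructor
        · nlinarith [mul_nonneg hr hS.le]
        · nlinarith [mul_nonneg ht hS.le]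
    -- conclude
    have hup1 : θ1 - A < π / 2 := by linarith [hd1.2]
    have hlow2 : -(π / 2) < θ2 - A := by linarith [hd2.1]
    have e1 : θ1 - A ≤ -(π / 2) := by
      by_contra h
      push_neg at h
      exact absurd (cos_pos_of_mem_Ioo ⟨h, hup1⟩) (not_lt.mpr hc1.1)
    have e2 : π / 2 ≤ θ2 - A := by
      by_contra h
      push_neg at h
      exact absurd (cos_pos_of_mem_Ioo ⟨hlow2, h⟩) (not_lt.mpr hc1.2)
    linarith

end TwoD

section Geo

open Real InnerProductGeometry
open scoped RealInnerProductSpace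

variable {s : ℕ}

lemma e1_norm (hs : 0 < s) : ‖e1 s‖ = 1 := by
  unfold e1
  rw [dif_pos hs, EuclideanSpace.norm_single, norm_one]

lemma e1_ne_zero (hs : 0 < s) : e1 s ≠ 0 := by
  intro h
  have := e1_norm hs
  rw [h, norm_zero] at this
  norm_num at this

lemma inner_eq_cos_angle (hs : 0 < s) {u : EuclideanSpace ℝ (Fin s)} (hu : ‖u‖ = 1) :
    ⟪u, e1 s⟫ = Real.cos (angle u (e1 s)) := by
  rw [cos_angle, hu, e1_norm hs]
  norm_num

lemma perp_norm (hs : 0 < s) {u : EuclideanSpace ℝ (Fin s)} (hu : ‖u‖ = 1) :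
    ‖u - ⟪u, e1 s⟫ • e1 s‖ = Real.sin (angle u (e1 s)) := by
  have he : ‖e1 s‖ = 1 := e1_norm hs
  have hc : ⟪u, e1 s⟫ = Real.cos (angle u (e1 s)) := inner_eq_cos_angle hs hu
  have hsq : ‖u - ⟪u, e1 s⟫ • e1 s‖ ^ 2 = Real.sin (angle u (e1 s)) ^ 2 := by
    rw [norm_sub_sq_real, real_inner_smul_right, norm_smul, he, hu]
    have hpy := Real.sin_sq_add_cos_sq (angle u (e1 s))
    rw [hc]
    simp [mul_pow, sq_abs]
    nlinarith
  have h1 : (0:ℝ) ≤ ‖u - ⟪u, e1 s⟫ • e1 s‖ := norm_nonneg _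
  have h2 : (0:ℝ) ≤ Real.sin (angle u (e1 s)) :=
    Real.sin_nonneg_of_nonneg_of_le_pi (angle_nonneg _ _) (angle_le_pi _ _)
  exact (pow_left_inj₀ h1 h2 (two_ne_zero)).mp hsq

lemma rayDir_decomp (hs : 0 < s) {δ : ℝ} (hδ0 : 0 < δ) (hδ : δ < π / 4)
    {u : EuclideanSpace ℝ (Fin s)} (hu : ‖u‖ = 1) :
    ∃ μ : ℝ, 0 ≤ μ ∧
      rayDir s δ u
        = Real.cos (thetaF δ (angle u (e1 s))) • e1 s + μ • (u - ⟪u, e1 s⟫ • e1 s) ∧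
      μ * ‖u - ⟪u, e1 s⟫ • e1 s‖ = Real.sin (thetaF δ (angle u (e1 s))) := by
  have hne : angle u (-(e1 s)) = π - angle u (e1 s) := angle_neg_right u (e1 s)
  by_cases h1 : angle u (e1 s) ≤ δ
  · refine ⟨0, le_refl 0, ?_, ?_⟩
    · rw [rayDir, if_pos h1, thetaF, if_pos h1]
      simp
    · rw [thetaF, if_pos h1]
      simp
  · by_cases h2 : angle u (-(e1 s)) ≤ δ
    · have h2' : π - angle u (e1 s) ≤ δ := by rw [← hne]; exact h2
      refine ⟨0, le_refl 0, ?_, ?_⟩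
      · rw [rayDir, if_neg h1, if_pos h2, thetaF, if_neg h1, if_pos h2']
        simp
      · rw [thetaF, if_neg h1, if_pos h2']
        simp
    · have h2' : ¬ (π - angle u (e1 s) ≤ δ) := by rw [← hne]; exact h2
      have hαδ : δ < angle u (e1 s) := lt_of_not_ge h1
      have hαπ : angle u (e1 s) < π - δ := by
        push_neg at h2'
        linarith
      have hsinα : 0 < Real.sin (angle u (e1 s)) :=
        Real.sin_pos_of_pos_of_lt_pi (by linarith) (by linarith)
      have hperp : ‖u - ⟪u, e1 s⟫ • e1 s‖ = Real.sin (angle u (e1 s)) := perp_norm hs hu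
      have hperp0 : ‖u - ⟪u, e1 s⟫ • e1 s‖ ≠ 0 := by rw [hperp]; exact hsinα.ne'
      set θ' := π / (π - 2 * δ) * (angle u (e1 s) - δ) with hθ'
      have hth : thetaF δ (angle u (e1 s)) = θ' := by
        rw [thetaF, if_neg h1, if_neg h2']
      have hden : 0 < π - 2 * δ := by have := pi_pos; linarith
      have hθ'0 : 0 ≤ θ' := by
        apply mul_nonneg (by positivity)
        linarith
      have hθ'π : θ' ≤ π := by
        have h3 : angle u (e1 s) - δ ≤ π - 2 * δ := by linarith
        calc π / (π - 2 * δ) * (angle u (e1 s) - δ)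
            ≤ π / (π - 2 * δ) * (π - 2 * δ) := mul_le_mul_of_nonneg_left h3 (by positivity)
          _ = π := by field_simp
      have hsθ : 0 ≤ Real.sin θ' := Real.sin_nonneg_of_nonneg_of_le_pi hθ'0 hθ'π
      refine ⟨Real.sin θ' * ‖u - ⟪u, e1 s⟫ • e1 s‖⁻¹, ?_, ?_, ?_⟩
      · positivity
      · rw [rayDir, if_neg h1, if_neg h2, hth, smul_smul]
      · rw [hth, mul_assoc, inv_mul_cancel₀ hperp0, mul_one]

lemma ray_point_comp (hs : 0 < s) {δ : ℝ} (hδ0 : 0 < δ) (hδ : δ < π / 4)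
    {u z : EuclideanSpace ℝ (Fin s)} (hu : ‖u‖ = 1) {t : ℝ} (ht : 0 ≤ t)
    (hz : z = u + t • rayDir s δ u) :
    ⟪z, e1 s⟫ = Real.cos (angle u (e1 s)) + t * Real.cos (thetaF δ (angle u (e1 s))) ∧
    ‖z - ⟪z, e1 s⟫ • e1 s‖
      = Real.sin (angle u (e1 s)) + t * Real.sin (thetaF δ (angle u (e1 s))) ∧
    ∃ c : ℝ, 1 ≤ c ∧ z - ⟪z, e1 s⟫ • e1 s = c • (u - ⟪u, e1 s⟫ • e1 s) := by
  obtain ⟨μ, hμ0, hdir, hμn⟩ := rayDir_decomp hs hδ0 hδ hu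
  have he : ‖e1 s‖ = 1 := e1_norm hs
  have hee : ⟪e1 s, e1 s⟫ = 1 := by
    rw [real_inner_self_eq_norm_sq, he, one_pow]
  have hue : ⟪u, e1 s⟫ = Real.cos (angle u (e1 s)) := inner_eq_cos_angle hs hu
  have hperpe : ⟪u - ⟪u, e1 s⟫ • e1 s, e1 s⟫ = 0 := by
    rw [inner_sub_left, real_inner_smul_left, hee]
    ring
  have hinz : ⟪z, e1 s⟫
      = Real.cos (angle u (e1 s)) + t * Real.cos (thetaF δ (angle u (e1 s))) := by
    rw [hz, inner_add_left, real_inner_smul_left, hdir, inner_add_left,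
      real_inner_smul_left, real_inner_smul_left, hee, hperpe, hue]
    ring
  have hzperp : z - ⟪z, e1 s⟫ • e1 s = (1 + t * μ) • (u - ⟪u, e1 s⟫ • e1 s) := by
    rw [hinz, hz, hdir, ← hue]
    module
  refine ⟨hinz, ?_, ⟨1 + t * μ, by nlinarith, hzperp⟩⟩
  rw [hzperp, norm_smul, Real.norm_eq_abs, abs_of_nonneg (by nlinarith), perp_norm hs hu]
  have hms : μ * Real.sin (angle u (e1 s)) = Real.sin (thetaF δ (angle u (e1 s))) := by
    rw [← perp_norm hs hu]
    exact hμn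
  linear_combination t * hms

end Geo

section Uniq

open Real InnerProductGeometry
open scoped RealInnerProductSpace

lemma opp_axis_false {s : ℕ} (hs : 0 < s) {δ : ℝ} (hδ0 : 0 < δ) (hδ : δ < Real.pi / 4)
    {z : EuclideanSpace ℝ (Fin s)} (h1 : z ∈ ray s δ (e1 s)) (h2 : z ∈ ray s δ (-(e1 s))) :
    False := by
  have he0 := e1_ne_zero hs
  have hde : rayDir s δ (e1 s) = e1 s := by
    rw [rayDir, if_pos]
    rw [angle_self he0]
    exact hδ0.le
  have hane : angle (-(e1 s)) (e1 s) = π := by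
    rw [angle_neg_left, angle_self he0, sub_zero]
  have hdne : rayDir s δ (-(e1 s)) = -(e1 s) := by
    rw [rayDir, if_neg, if_pos]
    · rw [angle_self (neg_ne_zero.mpr he0)]
      exact hδ0.le
    · rw [hane]
      intro h
      have := pi_pos
      linarith
  obtain ⟨t, ht, hzt⟩ := h1
  obtain ⟨r, hr, hzr⟩ := h2
  rw [hde] at hzt
  rw [hdne] at hzr
  have hz0 : (2 + t + r) • e1 s = 0 := by
    have h3 : (2 + t + r) • e1 s = (e1 s + t • e1 s) - (-e1 s + r • -e1 s) := by module
    rw [h3, ← hzt, ← hzr, sub_self]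
  rcases smul_eq_zero.mp hz0 with h | h
  · linarith
  · exact he0 h

lemma ray_base_unique {s : ℕ} (hs : 0 < s) {δ : ℝ} (hδ0 : 0 < δ) (hδ : δ < Real.pi / 4)
    {u v z : EuclideanSpace ℝ (Fin s)} (hu : ‖u‖ = 1) (hv : ‖v‖ = 1)
    (hzu : z ∈ ray s δ u) (hzv : z ∈ ray s δ v) : u = v := by
  obtain ⟨t, ht, hzt⟩ := hzu
  obtain ⟨r, hr, hzr⟩ := hzv
  have he : ‖e1 s‖ = 1 := e1_norm hs
  have he0 : e1 s ≠ 0 := e1_ne_zero hs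
  obtain ⟨hiu, hnu, cu, hcu1, hcu⟩ := ray_point_comp hs hδ0 hδ hu ht hzt
  obtain ⟨hiv, hnv, cv, hcv1, hcv⟩ := ray_point_comp hs hδ0 hδ hv hr hzr
  have hcu0 : (0:ℝ) < cu := lt_of_lt_of_le one_pos hcu1
  have hcv0 : (0:ℝ) < cv := lt_of_lt_of_le one_pos hcv1
  by_cases hp : z - ⟪z, e1 s⟫ • e1 s = 0
  · have hu0 : u - ⟪u, e1 s⟫ • e1 s = 0 := by
      have h3 := hcu
      rw [hp] at h3
      exact (smul_eq_zero.mp h3.symm).resolve_left hcu0.ne'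
    have hv0 : v - ⟪v, e1 s⟫ • e1 s = 0 := by
      have h3 := hcv
      rw [hp] at h3
      exact (smul_eq_zero.mp h3.symm).resolve_left hcv0.ne'
    rw [sub_eq_zero] at hu0 hv0
    have hau : ⟪u, e1 s⟫ = 1 ∨ ⟪u, e1 s⟫ = -1 := by
      have h3 : |⟪u, e1 s⟫| = 1 := by
        have h4 := congrArg norm hu0
        rw [hu, norm_smul, Real.norm_eq_abs, he, mul_one] at h4
        exact h4.symm
      exact abs_eq (by norm_num : (0:ℝ) ≤ 1) |>.mp h3
    have hav : ⟪v, e1 s⟫ = 1 ∨ ⟪v, e1 s⟫ = -1 := by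
      have h3 : |⟪v, e1 s⟫| = 1 := by
        have h4 := congrArg norm hv0
        rw [hv, norm_smul, Real.norm_eq_abs, he, mul_one] at h4
        exact h4.symm
      exact abs_eq (by norm_num : (0:ℝ) ≤ 1) |>.mp h3
    have hue : u = e1 s ∨ u = -e1 s := by
      rcases hau with h | h
      · left; rw [hu0, h, one_smul]
      · right; rw [hu0, h]; module
    have hve : v = e1 s ∨ v = -e1 s := by
      rcases hav with h | h
      · left; rw [hv0, h, one_smul]
      · right; rw [hv0, h]; module
    rcases hue with h1 | h1 <;> rcases hve with h2 | h2
    · rw [h1, h2]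
    · exfalso
      apply opp_axis_false hs hδ0 hδ (z := z)
      · rw [← h1]; exact ⟨t, ht, hzt⟩
      · rw [← h2]; exact ⟨r, hr, hzr⟩
    · exfalso
      apply opp_axis_false hs hδ0 hδ (z := z)
      · rw [← h2]; exact ⟨r, hr, hzr⟩
      · rw [← h1]; exact ⟨t, ht, hzt⟩
    · rw [h1, h2]
  · have hu0 : u - ⟪u, e1 s⟫ • e1 s ≠ 0 := by
      intro h
      apply hp
      rw [hcu, h, smul_zero]
    have hv0 : v - ⟪v, e1 s⟫ • e1 s ≠ 0 := by
      intro h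
      apply hp
      rw [hcv, h, smul_zero]
    have hsu : 0 < Real.sin (angle u (e1 s)) := by
      rw [← perp_norm hs hu]
      exact norm_pos_iff.mpr hu0
    have hsv : 0 < Real.sin (angle v (e1 s)) := by
      rw [← perp_norm hs hv]
      exact norm_pos_iff.mpr hv0
    have hαu0 : 0 < angle u (e1 s) := by
      rcases eq_or_lt_of_le (angle_nonneg u (e1 s)) with h | h
      · rw [← h, Real.sin_zero] at hsu; exact absurd hsu (lt_irrefl 0)
      · exact h
    have hαuπ : angle u (e1 s) < π := by
      rcases eq_or_lt_of_le (angle_le_pi u (e1 s)) with h | h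
      · rw [h, Real.sin_pi] at hsu; exact absurd hsu (lt_irrefl 0)
      · exact h
    have hαv0 : 0 < angle v (e1 s) := by
      rcases eq_or_lt_of_le (angle_nonneg v (e1 s)) with h | h
      · rw [← h, Real.sin_zero] at hsv; exact absurd hsv (lt_irrefl 0)
      · exact h
    have hαvπ : angle v (e1 s) < π := by
      rcases eq_or_lt_of_le (angle_le_pi v (e1 s)) with h | h
      · rw [h, Real.sin_pi] at hsv; exact absurd hsv (lt_irrefl 0)
      · exact h
    rcases lt_trichotomy (angle u (e1 s)) (angle v (e1 s)) with hlt | heq | hlt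
    · exact (twoD hδ0 hδ hαu0 hαvπ hlt ht hr (hiu.symm.trans hiv) (hnu.symm.trans hnv)).elim
    · have hnn : ‖u - ⟪u, e1 s⟫ • e1 s‖ = ‖v - ⟪v, e1 s⟫ • e1 s‖ := by
        rw [perp_norm hs hu, perp_norm hs hv, heq]
      have hscal : cu • (u - ⟪u, e1 s⟫ • e1 s) = cv • (v - ⟪v, e1 s⟫ • e1 s) :=
        hcu.symm.trans hcv
      have hn2 : cu * ‖u - ⟪u, e1 s⟫ • e1 s‖ = cv * ‖v - ⟪v, e1 s⟫ • e1 s‖ := by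
        calc cu * ‖u - ⟪u, e1 s⟫ • e1 s‖ = ‖cu • (u - ⟪u, e1 s⟫ • e1 s)‖ := by
              rw [norm_smul, Real.norm_eq_abs, abs_of_pos hcu0]
          _ = ‖cv • (v - ⟪v, e1 s⟫ • e1 s)‖ := by rw [hscal]
          _ = cv * ‖v - ⟪v, e1 s⟫ • e1 s‖ := by
              rw [norm_smul, Real.norm_eq_abs, abs_of_pos hcv0]
      have hcueq : cu = cv := by
        rw [hnn] at hn2
        exact mul_right_cancel₀ (by rwa [← hnn, norm_ne_zero_iff]) hn2
      have hperp_eq : u - ⟪u, e1 s⟫ • e1 s = v - ⟪v, e1 s⟫ • e1 s := by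
        rw [hcueq] at hscal
        exact smul_right_injective _ hcv0.ne' hscal
      have hie : ⟪u, e1 s⟫ = ⟪v, e1 s⟫ := by
        rw [inner_eq_cos_angle hs hu, inner_eq_cos_angle hs hv, heq]
      have : u - ⟪u, e1 s⟫ • e1 s + ⟪u, e1 s⟫ • e1 s = v - ⟪v, e1 s⟫ • e1 s + ⟪v, e1 s⟫ • e1 s := by
        rw [hperp_eq, hie]
      simpa using this
    · exact (twoD hδ0 hδ hαv0 hαuπ hlt hr ht (hiv.symm.trans hiu) (hnv.symm.trans hnu)).elim

end Uniq

lemma one_le_harm_s18 {p : ℕ} (hp : 1 ≤ p) : (1:ℝ) ≤ harm p := by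
  unfold harm
  calc (1:ℝ) = 1 / ((0:ℕ) + 1) := by norm_num
    _ ≤ ∑ k ∈ Finset.range p, (1:ℝ) / (k + 1) := by
        apply Finset.single_le_sum (f := fun k : ℕ => (1:ℝ) / (k + 1))
          (fun i _ => by positivity) (Finset.mem_range.mpr hp)

lemma setDist_le {E : Type*} [MetricSpace E] {A B : Set E} {a b : E}
    (ha : a ∈ A) (hb : b ∈ B) : setDist A B ≤ dist a b := by
  apply csInf_le
  · refine ⟨0, fun r hr => ?_⟩
    obtain ⟨a', _, b', _, hr⟩ := hr
    rw [hr]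
    exact dist_nonneg
  · exact ⟨a, ha, b, hb, rfl⟩

lemma base_mem_ray {s : ℕ} {δ : ℝ} (u : EuclideanSpace ℝ (Fin s)) : u ∈ ray s δ u :=
  ⟨0, le_refl 0, by simp⟩

/-- Chains from x to y (‖x‖, ‖y‖ ≥ 1, x on ray L_{x'}, y on ray L_{y'}) passing
only through the open unit ball have δ^ψ-length at least d_E(L_{x'}, L_{y'}). -/
theorem stmt18 (s : ℕ) (hs : 2 ≤ s) (δ : ℝ) (hδ0 : 0 < δ) (hδ : δ < Real.pi / 4)
    (x y x' y' : EuclideanSpace ℝ (Fin s))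
    (hx : 1 ≤ ‖x‖) (hy : 1 ≤ ‖y‖) (hx' : ‖x'‖ = 1) (hy' : ‖y'‖ = 1)
    (hxray : x ∈ ray s δ x') (hyray : y ∈ ray s δ y')
    (m : ℕ) (hm : 1 ≤ m) (f : ℕ → EuclideanSpace ℝ (Fin s))
    (h0 : f 0 = x) (hfm : f m = y)
    (hmid : ∀ i, 1 ≤ i → i ≤ m - 1 → ‖f i‖ < 1) :
    ∑ i ∈ Finset.range m,
        deltaPhi (0 : EuclideanSpace ℝ (Fin s)) (psiF s δ) (f i) (f (i + 1))
      ≥ setDist (ray s δ x') (ray s δ y') := by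
  have hs0 : 0 < s := lt_of_lt_of_le two_pos hs
  have hxy_le : setDist (ray s δ x') (ray s δ y') ≤ dist x y := setDist_le hxray hyray
  rcases eq_or_lt_of_le hm with hm1 | hm2
  · -- m = 1
    rw [← hm1] at hfm
    rw [← hm1, Finset.sum_range_one, h0, hfm]
    rw [ge_iff_le, deltaPhi, le_min_iff]
    refine ⟨hxy_le, ?_⟩
    have hposx : (0:ℝ) ≤ 1 / (1 + dist 0 x) := by positivity
    have hposy : (0:ℝ) ≤ 1 / (1 + dist 0 y) := by positivity
    by_cases hc1 : ∃ x'', ‖x''‖ = 1 ∧ x ∈ ray s δ x'' ∧ y ∈ ray s δ x'' ∧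
        ∃ p q : ℕ, 1 ≤ p ∧ 1 ≤ q ∧ ‖x‖ = harm p ∧ ‖y‖ = harm q
    · have hψ : psiF s δ x y = 0 := by
        unfold psiF
        rw [if_pos hc1]
      obtain ⟨w, hw1, hxw, hyw, -⟩ := hc1
      have hx'w : x' = w := ray_base_unique hs0 hδ0 hδ hx' hw1 hxray hxw
      have hy'w : y' = w := ray_base_unique hs0 hδ0 hδ hy' hw1 hyray hyw
      have h0' : setDist (ray s δ x') (ray s δ y') ≤ 0 := by
        have h3 := setDist_le (base_mem_ray (s := s) (δ := δ) w)
          (base_mem_ray (s := s) (δ := δ) w)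
        rw [dist_self] at h3
        rw [hx'w, hy'w]
        exact h3
      rw [hψ]
      linarith
    · by_cases hc2 : (∃ m : ℕ, 1 ≤ m ∧ ‖x‖ = harm m ∧ ‖y‖ = harm m) ∧
          (∃ x'', ‖x''‖ = 1 ∧ x ∈ ray s δ x'') ∧ (∃ y'', ‖y''‖ = 1 ∧ y ∈ ray s δ y'')
      · have hψ : psiF s δ x y = ‖hc2.2.1.choose - hc2.2.2.choose‖ := by
          unfold psiF
          rw [if_neg hc1, dif_pos hc2]
        have s1 := hc2.2.1.choose_spec
        have s2 := hc2.2.2.choose_spec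
        have e1' : hc2.2.1.choose = x' := ray_base_unique hs0 hδ0 hδ s1.1 hx' s1.2 hxray
        have e2' : hc2.2.2.choose = y' := ray_base_unique hs0 hδ0 hδ s2.1 hy' s2.2 hyray
        rw [hψ, e1', e2']
        have h3 : setDist (ray s δ x') (ray s δ y') ≤ dist x' y' :=
          setDist_le (base_mem_ray x') (base_mem_ray y')
        rw [dist_eq_norm] at h3
        linarith
      · have hψ : psiF s δ x y = ‖x - y‖ := by
          unfold psiF
          rw [if_neg hc1, dif_neg hc2]
        rw [hψ]
        rw [dist_eq_norm] at hxy_le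
        linarith
  · -- 2 ≤ m
    have key : ∀ i ∈ Finset.range m,
        dist (f i) (f (i + 1)) ≤ deltaPhi 0 (psiF s δ) (f i) (f (i + 1)) := by
      intro i hi
      rw [Finset.mem_range] at hi
      obtain ⟨j, hj, hjlt⟩ : ∃ j, (j = i ∨ j = i + 1) ∧ ‖f j‖ < 1 := by
        rcases Nat.eq_zero_or_pos i with h | h
        · exact ⟨1, Or.inr (by omega), hmid 1 le_rfl (by omega)⟩
        · exact ⟨i, Or.inl rfl, hmid i h (by omega)⟩
      have hnoh : ∀ p : ℕ, 1 ≤ p → ‖f j‖ ≠ harm p := fun p hp =>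
        ne_of_lt (lt_of_lt_of_le hjlt (one_le_harm_s18 hp))
      have hψ : psiF s δ (f i) (f (i + 1)) = ‖f i - f (i + 1)‖ := by
        unfold psiF
        rw [if_neg, dif_neg]
        · rintro ⟨⟨p, hp, hfp, hfq⟩, -⟩
          rcases hj with h | h
          · exact hnoh p hp (by rw [h]; exact hfp)
          · exact hnoh p hp (by rw [h]; exact hfq)
        · rintro ⟨w, -, -, -, p, q, hp, hq, hfp, hfq⟩
          rcases hj with h | h
          · exact hnoh p hp (by rw [h]; exact hfp)
          · exact hnoh q hq (by rw [h]; exact hfq)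
      rw [deltaPhi, le_min_iff]
      refine ⟨le_refl _, ?_⟩
      rw [hψ, ← dist_eq_norm]
      have h1 : (0:ℝ) ≤ 1 / (1 + dist 0 (f i)) := by positivity
      have h2 : (0:ℝ) ≤ 1 / (1 + dist 0 (f (i + 1))) := by positivity
      linarith
    calc setDist (ray s δ x') (ray s δ y') ≤ dist x y := hxy_le
      _ = dist (f 0) (f m) := by rw [h0, hfm]
      _ ≤ ∑ i ∈ Finset.range m, dist (f i) (f (i + 1)) := dist_le_range_sum_dist f m
      _ ≤ ∑ i ∈ Finset.range m, deltaPhi 0 (psiF s δ) (f i) (f (i + 1)) :=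
          Finset.sum_le_sum key
end
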